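/- arXiv:2303.01290 — 5 statements merged into one kernel-verified Lean document; each statement's English description precedes it below -/
import Mathlib

section
/- For any connected graph G, the neighborhood diversity of the square G² is at most the modular-width of G. -/
/-- `M` is a module of the subgraph of `G` induced by `S`. -/
def IsModuleOn {V : Type*} (G : SimpleGraph V) (S M : Finset V) : Prop :=
  M ⊆ S ∧ ∀ u ∈ M, ∀ v ∈ M,
    (G.neighborSet u ∩ ↑S) \ ↑M = (G.neighborSet v ∩ ↑S) \ ↑M

/-- The induced subgraph `G[S]` has modular-width at most `ℓ`. -/
inductive MWLeOn {V : Type*} (G : SimpleGraph V) (ℓ : ℕ) : Finset V → Prop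
  | base (S : Finset V) (h : S.card ≤ ℓ) : MWLeOn G ℓ S
  | step (S : Finset V) (P : Finset (Finset V)) (hcard : P.card ≤ ℓ)
      (hne : ∀ T ∈ P, T.Nonempty)
      (hsub : ∀ T ∈ P, T ⊆ S)
      (hpart : ∀ v ∈ S, ∃! T, T ∈ P ∧ v ∈ T)
      (hmod : ∀ T ∈ P, IsModuleOn G S T)
      (hrec : ∀ T ∈ P, MWLeOn G ℓ T) : MWLeOn G ℓ S

/-- The modular-width of `G`. -/
noncomputable def mw {V : Type*} [Fintype V] (G : SimpleGraph V) : ℕ :=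
  sInf {ℓ | 2 ≤ ℓ ∧ MWLeOn G ℓ Finset.univ}

/-- The graph `H` has neighborhood diversity at most `ℓ`: the vertex set can be
partitioned into at most `ℓ` parts such that any two vertices in a common part
have the same neighborhoods (up to each other). -/
def NDLe {V : Type*} [Fintype V] (H : SimpleGraph V) (ℓ : ℕ) : Prop :=
  ∃ P : Finset (Finset V), P.card ≤ ℓ ∧ (∀ T ∈ P, T.Nonempty) ∧
    (∀ v : V, ∃! T, T ∈ P ∧ v ∈ T) ∧
    ∀ T ∈ P, ∀ u ∈ T, ∀ v ∈ T,
      H.neighborSet u \ {v} = H.neighborSet v \ {u}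

/-- The neighborhood diversity of `H`. -/
noncomputable def nd {V : Type*} [Fintype V] (H : SimpleGraph V) : ℕ :=
  sInf {ℓ | NDLe H ℓ}

/-- The square of `G`: distinct vertices are adjacent iff their distance in `G`
is at most `2`. -/
def SimpleGraph.square {V : Type*} (G : SimpleGraph V) : SimpleGraph V where
  Adj u v := u ≠ v ∧ G.Reachable u v ∧ G.dist u v ≤ 2
  symm := ⟨by
    rintro u v ⟨h1, h2, h3⟩
    exact ⟨h1.symm, h2.symm, by rwa [SimpleGraph.dist_comm]⟩⟩
  loopless := ⟨by rintro v ⟨h1, -, -⟩; exact h1 rfl⟩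

section Aux

variable {V : Type*} {G : SimpleGraph V}

/-- Along a walk from inside `M` to outside `M`, there is an edge leaving `M`. -/
lemma exists_exit {M : Set V} {a z : V} (p : G.Walk a z) :
    a ∈ M → z ∉ M → ∃ b ∈ M, ∃ x, x ∉ M ∧ G.Adj b x := by
  induction p with
  | nil => exact fun ha hz => absurd ha hz
  | @cons u x z' h q ih =>
    intro ha hz
    by_cases hm : x ∈ M
    · exact ih hm hz
    · exact ⟨u, ha, x, hm, h⟩

lemma module_sq_subset {V : Type*} [Fintype V] {G : SimpleGraph V} {M : Finset V}
    (hconn : G.Connected)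
    (hmod : ∀ a ∈ M, ∀ b ∈ M, G.neighborSet a \ ↑M = G.neighborSet b \ ↑M)
    (hprop : M ≠ Finset.univ) {u v : V} (hu : u ∈ M) (hv : v ∈ M) :
    G.square.neighborSet u \ {v} ⊆ G.square.neighborSet v \ {u} := by
  have key : ∀ a ∈ M, ∀ b ∈ M, ∀ x, x ∉ M → G.Adj a x → G.Adj b x := by
    intro a ha b hb x hx hax
    have := (Set.ext_iff.mp (hmod a ha b hb) x).mp ⟨hax, hx⟩
    exact this.1
  intro w hw
  obtain ⟨hadj, hwv⟩ := hw
  obtain ⟨hwu, hr, hd⟩ : G.square.Adj u w := hadj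
  have hwv' : w ≠ v := hwv
  have hdist : G.dist v w ≤ 2 := by
    by_cases hwM : w ∈ M
    · -- both v, w in M : find an external common neighbor
      have hz : ∃ z, z ∉ M := by
        by_contra h
        push_neg at h
        exact hprop (Finset.eq_univ_iff_forall.mpr h)
      obtain ⟨z, hzM⟩ := hz
      obtain ⟨p⟩ := hconn.preconnected u z
      obtain ⟨b, hb, x, hx, hbx⟩ := exists_exit (M := (↑M : Set V)) p hu hzM
      have hvx : G.Adj v x := key b hb v hv x hx hbx
      have hwx : G.Adj w x := key b hb w hwM x hx hbx
      refine le_trans (SimpleGraph.dist_le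
        (SimpleGraph.Walk.cons hvx (SimpleGraph.Walk.cons hwx.symm SimpleGraph.Walk.nil))) ?_
      simp
    · -- w outside M
      obtain ⟨p, hp⟩ := hr.exists_walk_length_eq_dist
      cases p with
      | nil => exact absurd rfl hwu
      | @cons _ x _ h q =>
        cases q with
        | nil =>
          -- u adjacent to w
          have : G.Adj v w := key u hu v hv w hwM h
          refine le_trans (SimpleGraph.dist_le (SimpleGraph.Walk.cons this SimpleGraph.Walk.nil)) ?_
          simp
        | @cons _ y _ h' q' =>
          cases q' with
          | nil =>
            by_cases hxM : x ∈ M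
            · have : G.Adj v w := key x hxM v hv w hwM h'
              refine le_trans (SimpleGraph.dist_le (SimpleGraph.Walk.cons this SimpleGraph.Walk.nil)) ?_
              simp
            · have hvx : G.Adj v x := key u hu v hv x hxM h
              refine le_trans (SimpleGraph.dist_le
                (SimpleGraph.Walk.cons hvx (SimpleGraph.Walk.cons h' SimpleGraph.Walk.nil))) ?_
              simp
          | cons h'' q'' =>
            exfalso
            rw [← hp] at hd
            simp [SimpleGraph.Walk.length_cons] at hd
  exact ⟨⟨fun h => hwv' h.symm, hconn.preconnected v w, hdist⟩, fun h => hwu h.symm⟩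

lemma mw_proper {V : Type*} {G : SimpleGraph V} {ℓ : ℕ} {S : Finset V}
    (h : MWLeOn G ℓ S) :
    S.card ≤ ℓ ∨ ∃ P : Finset (Finset V), P.card ≤ ℓ ∧ (∀ T ∈ P, T.Nonempty) ∧
      (∀ T ∈ P, T ⊆ S) ∧ (∀ v ∈ S, ∃! T, T ∈ P ∧ v ∈ T) ∧
      (∀ T ∈ P, IsModuleOn G S T) ∧ (∀ T ∈ P, T ≠ S) := by
  induction h with
  | base S h => exact Or.inl h
  | step S P hcard hne hsub hpart hmod hrec ih =>
    by_cases hS : S ∈ P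
    · exact ih S hS
    · exact Or.inr ⟨P, hcard, hne, hsub, hpart, hmod, fun T hT hTS => hS (hTS ▸ hT)⟩

end Aux

/-- For any connected graph `G`, the neighborhood diversity of the square `G²`
is at most the modular-width of `G`. -/
theorem nd_square_le_mw {V : Type*} [Fintype V] (G : SimpleGraph V)
    (hconn : G.Connected) : nd G.square ≤ mw G := by
  have hmem : mw G ∈ {ℓ | 2 ≤ ℓ ∧ MWLeOn G ℓ Finset.univ} := by
    apply Nat.sInf_mem
    exact ⟨max 2 (Fintype.card V), le_max_left _ _,
      .base _ (by simp [le_max_right])⟩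
  obtain ⟨-, hmw⟩ := hmem
  apply Nat.sInf_le
  show NDLe G.square (mw G)
  classical
  rcases mw_proper hmw with hbase | ⟨P, hcard, hne, hsub, hpart, hmod, hproper⟩
  · -- singleton partition
    refine ⟨Finset.univ.image (fun v => {v}), ?_, ?_, ?_, ?_⟩
    · refine le_trans Finset.card_image_le ?_
      simpa using hbase
    · intro T hT
      simp only [Finset.mem_image] at hT
      obtain ⟨v, -, rfl⟩ := hT
      exact ⟨v, Finset.mem_singleton_self v⟩
    · intro v
      refine ⟨{v}, ⟨Finset.mem_image_of_mem _ (Finset.mem_univ v), Finset.mem_singleton_self v⟩, ?_⟩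
      rintro T ⟨hT, hvT⟩
      simp only [Finset.mem_image] at hT
      obtain ⟨w, -, rfl⟩ := hT
      rw [Finset.mem_singleton] at hvT
      subst hvT
      rfl
    · intro T hT a ha b hb
      simp only [Finset.mem_image] at hT
      obtain ⟨w, -, rfl⟩ := hT
      rw [Finset.mem_singleton] at ha hb
      subst ha; subst hb
      rfl
  · refine ⟨P, hcard, hne, fun v => hpart v (Finset.mem_univ v), ?_⟩
    intro T hT a ha b hb
    have hmod' : ∀ x ∈ T, ∀ y ∈ T, G.neighborSet x \ ↑T = G.neighborSet y \ ↑T := by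
      intro x hx y hy
      have := (hmod T hT).2 x hx y hy
      simpa using this
    exact Set.Subset.antisymm
      (module_sq_subset hconn hmod' (hproper T hT) ha hb)
      (module_sq_subset hconn hmod' (hproper T hT) hb ha)
end

section
/- Let G be a connected graph and M a module of G. Then for any u,v ∈ M, the neighborhoods of u and v in G² outside M coincide: N_{G²}(u) \ M = N_{G²}(v) \ M. -/
/-- A vertex subset `M` is a module of `G`. -/
def SimpleGraph.IsModule {V : Type*} (G : SimpleGraph V) (M : Set V) : Prop :=
  ∀ u ∈ M, ∀ v ∈ M, G.neighborSet u \ M = G.neighborSet v \ M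

lemma module_square_subset {V : Type*} (G : SimpleGraph V) (M : Set V)
    (hmod : G.IsModule M) :
    ∀ u ∈ M, ∀ v ∈ M,
      G.square.neighborSet u \ M ⊆ G.square.neighborSet v \ M := by
  intro u hu v hv w ⟨⟨hne, hreach, hdist⟩, hwM⟩
  have key : G.Reachable v w ∧ G.dist v w ≤ 2 := by
    obtain ⟨p, hp⟩ := hreach.exists_walk_length_eq_dist
    rw [← hp] at hdist
    cases p with
    | nil => exact absurd rfl hne
    | cons hux q =>
      rename_i x
      cases q with
      | nil =>
        -- u adjacent to w
        have hw : w ∈ G.neighborSet v \ M := (hmod u hu v hv) ▸ ⟨hux, hwM⟩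
        exact ⟨hw.1.reachable,
          le_trans (SimpleGraph.dist_le hw.1.toWalk) (by show 1 ≤ 2; norm_num)⟩
      | cons hxw r =>
        rename_i y
        cases r with
        | nil =>
          -- u - x - w
          by_cases hxM : x ∈ M
          · have hw : w ∈ G.neighborSet v \ M := (hmod x hxM v hv) ▸ ⟨hxw, hwM⟩
            exact ⟨hw.1.reachable,
              le_trans (SimpleGraph.dist_le hw.1.toWalk) (by show 1 ≤ 2; norm_num)⟩
          · have hx : x ∈ G.neighborSet v \ M := (hmod u hu v hv) ▸ ⟨hux, hxM⟩
            exact ⟨⟨SimpleGraph.Walk.cons hx.1 hxw.toWalk⟩,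
              le_trans (SimpleGraph.dist_le (SimpleGraph.Walk.cons hx.1 hxw.toWalk))
                (by show 2 ≤ 2; norm_num)⟩
        | cons h r' =>
          simp at hdist
  exact ⟨⟨fun h => hwM (h ▸ hv), key.1, key.2⟩, hwM⟩

/-- If `G` is connected and `M` is a module of `G`, then the neighborhoods outside `M`
in the square `G²` of any two vertices of `M` coincide. -/
theorem module_square_neighborhood {V : Type*} (G : SimpleGraph V) (M : Set V)
    (hconn : G.Connected) (hmod : G.IsModule M) :
    ∀ u ∈ M, ∀ v ∈ M,
      G.square.neighborSet u \ M = G.square.neighborSet v \ M := by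
  intro u hu v hv
  exact Set.Subset.antisymm (module_square_subset G M hmod u hu v hv)
    (module_square_subset G M hmod v hv u hu)
end

section
/- Let G = (V,E) be a graph of diameter at most k, p = (p_1,…,p_k) positive integers with max_d p_d ≤ 2·min_d p_d, and define w(u,v) = p_{dist_G(u,v)} for distinct u,v. Fix an ordering v_1,…,v_n of V and let l be an L(p)-labeling with l(v_1) ≤ l(v_2) ≤ … ≤ l(v_n) of minimum span among all L(p)-labelings nondecreasing along this ordering. Then l(v_i) = Σ_{t=1}^{i-1} w(v_t, v_{t+1}) for every i ∈ [n]. -/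
/-- `l` is an `L(p)`-labeling of `G`: any two distinct vertices at distance `d`
receive labels differing by at least `p d`. -/
def IsLpLabeling {V : Type*} (G : SimpleGraph V) (p : ℕ → ℕ) (l : V → ℕ) : Prop :=
  ∀ u v : V, u ≠ v → (p (G.dist u v) : ℤ) ≤ |(l u : ℤ) - (l v : ℤ)|

/-- The span of a labeling: its maximum label. -/
def span {V : Type*} [Fintype V] (l : V → ℕ) : ℕ :=
  Finset.univ.sup l

/-- `λ_p(G)`: the minimum span among all `L(p)`-labelings of `G`. -/
noncomputable def lambda {V : Type*} [Fintype V] (G : SimpleGraph V) (p : ℕ → ℕ) : ℕ :=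
  sInf {s | ∃ l : V → ℕ, IsLpLabeling G p l ∧ span l = s}

/-- The sum of the weights `w(v_t, v_{t+1}) = p (dist v_t v_{t+1})` along the first
`i` consecutive pairs of the ordering `σ`. -/
noncomputable def prefW {V : Type*} (G : SimpleGraph V) (p : ℕ → ℕ) {n : ℕ} (σ : Fin n → V) (i : ℕ) : ℕ :=
  ∑ t ∈ Finset.range i,
    if h : t + 1 < n then p (G.dist (σ ⟨t, by omega⟩) (σ ⟨t + 1, h⟩)) else 0

/-- Let `G` have diameter at most `k`, `p` be positive on `[1, k]` with
`p_max ≤ 2 p_min`, and `σ` an ordering of the vertices. If `l` is an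
`L(p)`-labeling that is nondecreasing along `σ` and has minimum span among all
such labelings, then `l(v_i)` equals the sum of the weights `p (dist v_t v_{t+1})`
for `t = 1, …, i − 1`. -/
theorem labeling_eq_prefix_sums {V : Type*} [Fintype V] (G : SimpleGraph V) (p : ℕ → ℕ) (k : ℕ)
    (hconn : G.Connected) (hdiam : ∀ u v : V, G.dist u v ≤ k)
    (hpos : ∀ d ∈ Finset.Icc 1 k, 0 < p d)
    (hratio : ∀ d ∈ Finset.Icc 1 k, ∀ d' ∈ Finset.Icc 1 k, p d ≤ 2 * p d')
    (σ : Fin (Fintype.card V) ≃ V) (l : V → ℕ)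
    (hl : IsLpLabeling G p l) (hmono : Monotone (l ∘ σ))
    (hmin : ∀ l' : V → ℕ, IsLpLabeling G p l' → Monotone (l' ∘ σ) → span l ≤ span l') :
    ∀ i : Fin (Fintype.card V), l (σ i) = prefW G p σ i.val := by
  classical
  have hdist : ∀ u v : V, u ≠ v → G.dist u v ∈ Finset.Icc 1 k := by
    intro u v huv
    simp only [Finset.mem_Icc]
    exact ⟨hconn.pos_dist_of_ne huv, hdiam u v⟩
  have hneq : ∀ i j : Fin (Fintype.card V), (i : ℕ) ≠ (j : ℕ) → σ i ≠ σ j := by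
    intro i j hij he
    exact hij (congrArg Fin.val (σ.injective he))
  -- consecutive gap for l
  have hgap : ∀ (t : ℕ) (h : t + 1 < Fintype.card V),
      l (σ ⟨t, Nat.lt_of_succ_lt h⟩) +
        p (G.dist (σ ⟨t, Nat.lt_of_succ_lt h⟩) (σ ⟨t + 1, h⟩)) ≤ l (σ ⟨t + 1, h⟩) := by
    intro t h
    have hne := hneq ⟨t, Nat.lt_of_succ_lt h⟩ ⟨t + 1, h⟩ (by simp)
    have h1 := hl _ _ hne
    have h2 : l (σ ⟨t, Nat.lt_of_succ_lt h⟩) ≤ l (σ ⟨t + 1, h⟩) :=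
      hmono (show (⟨t, Nat.lt_of_succ_lt h⟩ : Fin _) ≤ ⟨t + 1, h⟩ from by
        simp [Fin.le_def])
    rcases abs_cases ((l (σ ⟨t, Nat.lt_of_succ_lt h⟩) : ℤ) - l (σ ⟨t + 1, h⟩)) with ⟨he, _⟩ | ⟨he, _⟩ <;>
      omega
  -- prefW step
  have hstep : ∀ (t : ℕ) (h : t + 1 < Fintype.card V),
      prefW G p σ (t + 1) = prefW G p σ t +
        p (G.dist (σ ⟨t, Nat.lt_of_succ_lt h⟩) (σ ⟨t + 1, h⟩)) := by
    intro t h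
    rw [prefW, Finset.sum_range_succ, dif_pos h]
    rfl
  have hprefmono : Monotone (prefW G p σ) := fun a b hab =>
    Finset.sum_le_sum_of_subset (Finset.range_subset_range.mpr hab)
  -- chain inequality
  have key : ∀ (a : ℕ) (ha : a < Fintype.card V) (b : ℕ), a ≤ b →
      ∀ hb : b < Fintype.card V,
      l (σ ⟨a, ha⟩) + prefW G p σ b ≤ l (σ ⟨b, hb⟩) + prefW G p σ a := by
    intro a ha b hab
    induction b, hab using Nat.le_induction with
    | base => intro hb; exact le_rfl
    | succ b hab ih =>
      intro hb
      have h1 := ih (Nat.lt_of_succ_lt hb)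
      have h2 := hgap b hb
      have h3 := hstep b hb
      omega
  -- prefW differences dominate p of distances
  have hdiff : ∀ (a b : ℕ) (ha : a < Fintype.card V) (hb : b < Fintype.card V), a < b →
      p (G.dist (σ ⟨a, ha⟩) (σ ⟨b, hb⟩)) + prefW G p σ a ≤ prefW G p σ b := by
    intro a b ha hb hab
    have hd := hdist _ _ (hneq ⟨a, ha⟩ ⟨b, hb⟩ (by simpa using Nat.ne_of_lt hab))
    by_cases h : a + 1 = b
    · subst h
      have h3 := hstep a hb
      omega
    · have h2n : a + 1 + 1 < Fintype.card V := by omega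
      have e1 := hstep a (Nat.lt_of_succ_lt h2n)
      have e2 := hstep (a + 1) h2n
      have hm := hprefmono (show a + 1 + 1 ≤ b by omega)
      have hd1 := hdist _ _ (hneq ⟨a, ha⟩ ⟨a + 1, Nat.lt_of_succ_lt h2n⟩ (by simp))
      have hd2 := hdist _ _ (hneq ⟨a + 1, Nat.lt_of_succ_lt h2n⟩ ⟨a + 1 + 1, h2n⟩ (by simp))
      have hr1 := hratio _ hd _ hd1
      have hr2 := hratio _ hd _ hd2
      omega
  -- the candidate minimal labeling
  have hl' : IsLpLabeling G p (fun v => prefW G p σ (σ.symm v)) := by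
    intro u v huv
    have hne : ((σ.symm u : Fin _) : ℕ) ≠ ((σ.symm v : Fin _) : ℕ) := by
      intro h
      exact huv (by
        have : σ.symm u = σ.symm v := Fin.ext h
        simpa using congrArg σ this)
    have heu : σ ⟨((σ.symm u : Fin _) : ℕ), (σ.symm u).isLt⟩ = u := by
      simpa using σ.apply_symm_apply u
    have hev : σ ⟨((σ.symm v : Fin _) : ℕ), (σ.symm v).isLt⟩ = v := by
      simpa using σ.apply_symm_apply v
    rcases lt_or_gt_of_ne hne with h | h
    · have h1 := hdiff _ _ (σ.symm u).isLt (σ.symm v).isLt h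
      rw [heu, hev] at h1
      calc (p (G.dist u v) : ℤ)
          ≤ (prefW G p σ (σ.symm v) : ℤ) - prefW G p σ (σ.symm u) := by push_cast; omega
        _ ≤ |(prefW G p σ (σ.symm v) : ℤ) - prefW G p σ (σ.symm u)| := le_abs_self _
        _ = _ := abs_sub_comm _ _
    · have h1 := hdiff _ _ (σ.symm v).isLt (σ.symm u).isLt h
      rw [heu, hev, G.dist_comm] at h1
      calc (p (G.dist u v) : ℤ)
          ≤ (prefW G p σ (σ.symm u) : ℤ) - prefW G p σ (σ.symm v) := by push_cast; omega
        _ ≤ |(prefW G p σ (σ.symm u) : ℤ) - prefW G p σ (σ.symm v)| := le_abs_self _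
  have hmono' : Monotone ((fun v => prefW G p σ (σ.symm v)) ∘ σ) := by
    intro a b hab
    simp only [Function.comp_apply, Equiv.symm_apply_apply]
    exact hprefmono hab
  -- finish
  intro i
  have hnpos : 0 < Fintype.card V := i.pos
  have hspan1 : l (σ ⟨Fintype.card V - 1, by omega⟩) ≤ span l :=
    Finset.le_sup (Finset.mem_univ _)
  have hspan2 : span (fun v => prefW G p σ (σ.symm v)) ≤ prefW G p σ (Fintype.card V - 1) := by
    apply Finset.sup_le
    intro v _
    exact hprefmono (by have := (σ.symm v).isLt; omega)
  have h1 : l (σ ⟨Fintype.card V - 1, by omega⟩) ≤ prefW G p σ (Fintype.card V - 1) :=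
    hspan1.trans ((hmin _ hl' hmono').trans hspan2)
  have hpref0 : prefW G p σ 0 = 0 := by simp [prefW]
  have hkey0 := key 0 (by omega) (Fintype.card V - 1) (by omega) (by omega)
  have hkeyi1 := key 0 (by omega) (i : ℕ) (by omega) i.isLt
  have hkeyi2 := key (i : ℕ) i.isLt (Fintype.card V - 1) (by omega) (by omega)
  have heta : (⟨(i : ℕ), i.isLt⟩ : Fin (Fintype.card V)) = i := rfl
  rw [heta] at hkeyi1 hkeyi2
  omega
end

section
/- Let G be a graph of diameter at most 2 on n vertices, let p ≤ q be positive integers, and for an ordering π = (v_1,…,v_n) of V define B_π = { i ∈ [n−1] : v_i and v_{i+1} are non-adjacent in G }. Then the minimum span λ_{(p,q)}(G) of an L(p,q)-labeling satisfies λ_{(p,q)}(G) = (n−1)p + (q−p)·min_π |B_π|. -/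
/-- `l` is an `L(p,q)`-labeling of `G`: adjacent vertices receive labels at least `p`
apart, and vertices at distance `2` receive labels at least `q` apart. -/
def IsLpqLabeling {V : Type*} (G : SimpleGraph V) (p q : ℕ) (l : V → ℕ) : Prop :=
  ∀ u v : V, u ≠ v →
    (G.Adj u v → (p : ℤ) ≤ |(l u : ℤ) - (l v : ℤ)|) ∧
    (G.dist u v = 2 → (q : ℤ) ≤ |(l u : ℤ) - (l v : ℤ)|)

/-- `λ_{(p,q)}(G)`: the minimum span among all `L(p,q)`-labelings of `G`. -/
noncomputable def lambdaPQ {V : Type*} [Fintype V] (G : SimpleGraph V) (p q : ℕ) : ℕ :=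
  sInf {s | ∃ l : V → ℕ, IsLpqLabeling G p q l ∧ span l = s}

/-- The number of consecutive pairs of the ordering `L` that are non-adjacent in `G`,
i.e. `|B_π|`. -/
def nonAdjCount {V : Type*} (G : SimpleGraph V) [DecidableRel G.Adj] : List V → ℕ
  | a :: b :: rest => (if G.Adj a b then 0 else 1) + nonAdjCount G (b :: rest)
  | _ => 0

namespace LpqAux

variable {V : Type*} [DecidableEq V] (G : SimpleGraph V) [DecidableRel G.Adj] (p q : ℕ)

def lbl : List V → V → ℕ
  | a :: b :: rest, v => if v = a then 0 else (if G.Adj a b then p else q) + lbl (b :: rest) v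
  | _, _ => 0

lemma lbl_head (a : V) (t : List V) : lbl G p q (a :: t) a = 0 := by
  cases t <;> simp [lbl]

lemma lbl_sep (hpq : p ≤ q) (hq2 : q ≤ 2 * p) :
    ∀ L : List V, L.Nodup → ∀ u v : V, u ∈ L → v ∈ L → u ≠ v →
      (p : ℤ) ≤ |(lbl G p q L u : ℤ) - lbl G p q L v| ∧
      (¬ G.Adj u v → (q : ℤ) ≤ |(lbl G p q L u : ℤ) - lbl G p q L v|) := by
  intro L
  induction L with
  | nil => intro _ u v hu; simp at hu
  | cons a t ih =>
    intro hnd u v hu hv huv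
    cases t with
    | nil =>
      simp at hu hv; exact absurd (hu.trans hv.symm) huv
    | cons b rest =>
      have hndt : (b :: rest).Nodup := hnd.of_cons
      have hval : ∀ w ∈ b :: rest, lbl G p q (a :: b :: rest) w
          = (if G.Adj a b then p else q) + lbl G p q (b :: rest) w := by
        intro w hw
        have hwa : w ≠ a := fun h => (List.nodup_cons.mp hnd).1 (h ▸ hw)
        simp [lbl, hwa]
      -- key: separation between a and any tail element
      have key : ∀ w ∈ b :: rest, ((p : ℤ) ≤ (lbl G p q (a :: b :: rest) w : ℤ)) ∧
          (¬ G.Adj a w → (q : ℤ) ≤ (lbl G p q (a :: b :: rest) w : ℤ)) := by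
        intro w hw
        rw [hval w hw]
        by_cases hwb : w = b
        · subst hwb
          rw [lbl_head]
          by_cases hadj : G.Adj a w <;> simp [hadj] <;> omega
        · have hwmem : w ∈ rest := by
            rcases List.mem_cons.mp hw with h | h
            · exact absurd h hwb
            · exact h
          have hsep := (ih hndt b w (by simp) (by simp [hwmem]) (Ne.symm hwb)).1
          rw [lbl_head] at hsep
          simp only [Nat.cast_zero, zero_sub, abs_neg, Int.abs_natCast] at hsep
          constructor
          · push_cast; split_ifs <;> omega
          · intro _; push_cast; split_ifs <;> omega
      rcases List.mem_cons.mp hu with hua | hut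
      · subst hua
        have hvt : v ∈ b :: rest := by
          rcases List.mem_cons.mp hv with h | h
          · exact absurd h.symm huv
          · exact h
        obtain ⟨k1, k2⟩ := key v hvt
        rw [lbl_head]
        simp only [Nat.cast_zero, zero_sub, abs_neg, Int.abs_natCast]
        exact ⟨k1, k2⟩
      · rcases List.mem_cons.mp hv with hva | hvt
        · subst hva
          obtain ⟨k1, k2⟩ := key u hut
          rw [lbl_head, abs_sub_comm]
          simp only [Nat.cast_zero, zero_sub, abs_neg, Int.abs_natCast]
          exact ⟨k1, fun hna => k2 (fun h => hna (G.adj_symm h))⟩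
        · rw [hval u hut, hval v hvt]
          have heq : ((((if G.Adj a b then p else q) + lbl G p q (b :: rest) u : ℕ)) : ℤ)
              - (((if G.Adj a b then p else q) + lbl G p q (b :: rest) v : ℕ) : ℤ)
              = (lbl G p q (b :: rest) u : ℤ) - lbl G p q (b :: rest) v := by
            push_cast; ring
          rw [heq]
          exact ih hndt u v hut hvt huv

lemma lbl_le (hpq : p ≤ q) :
    ∀ L : List V, ∀ v : V,
      lbl G p q L v ≤ (L.length - 1) * p + (q - p) * nonAdjCount G L := by
  intro L
  induction L with
  | nil => intro v; simp [lbl]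
  | cons a t ih =>
    intro v
    cases t with
    | nil => simp [lbl]
    | cons b rest =>
      by_cases hva : v = a
      · rw [hva, lbl_head]; exact Nat.zero_le _
      · have hstep : lbl G p q (a :: b :: rest) v
            = (if G.Adj a b then p else q) + lbl G p q (b :: rest) v := by
          simp [lbl, hva]
        rw [hstep]
        have := ih v
        have hlen : (a :: b :: rest).length - 1 = ((b :: rest).length - 1) + 1 := by
          simp
        rw [hlen, show nonAdjCount G (a :: b :: rest)
            = (if G.Adj a b then 0 else 1) + nonAdjCount G (b :: rest) from rfl]
        rw [add_mul, one_mul, mul_add]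
        have hsub : p + (q - p) = q := by omega
        split_ifs with h
        · simp only [mul_zero]; omega
        · simp only [mul_one]; omega

lemma chain_lb (hpq : p ≤ q) (l : V → ℕ) :
    ∀ L : List V, L.Chain' (fun a b => l a + (if G.Adj a b then p else q) ≤ l b) →
      ∀ (h : L ≠ []),
        l (L.head h) + (L.length - 1) * p + (q - p) * nonAdjCount G L ≤ l (L.getLast h) := by
  intro L
  induction L with
  | nil => intro _ h; exact absurd rfl h
  | cons a t ih =>
    intro hch h
    cases t with
    | nil => simp [nonAdjCount]
    | cons b rest =>
      rw [List.Chain', List.isChain_cons_cons] at hch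
      obtain ⟨hab, hch'⟩ := hch
      have hlast : (a :: b :: rest).getLast h = (b :: rest).getLast (by simp) :=
        List.getLast_cons (by simp)
      rw [hlast]
      have := ih hch' (by simp)
      simp only [List.head_cons] at this ⊢
      rw [show (a :: b :: rest).length - 1 = ((b :: rest).length - 1) + 1 by simp,
        show nonAdjCount G (a :: b :: rest)
            = (if G.Adj a b then 0 else 1) + nonAdjCount G (b :: rest) from rfl]
      rw [add_mul, one_mul, mul_add]
      have hsub : p + (q - p) = q := by omega
      split_ifs at hab ⊢ with hadj
      · simp only [mul_zero]; omega
      · simp only [mul_one]; omega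

end LpqAux

/-- Let `G` be a graph of diameter at most `2` on `n` vertices and `p ≤ q ≤ 2p`
positive integers. Then `λ_{(p,q)}(G) = (n − 1)·p + (q − p)·min_π |B_π|`, where the
minimum is over all orderings `π` of the vertices and `B_π` is the set of indices of
consecutive non-adjacent pairs along `π`. -/
theorem lambda_pq_eq {V : Type*} [Fintype V] (G : SimpleGraph V) [DecidableRel G.Adj]
    (p q : ℕ) (hconn : G.Connected) (hdiam : ∀ u v : V, G.dist u v ≤ 2)
    (hp : 0 < p) (hpq : p ≤ q) (hq : q ≤ 2 * p) :
    lambdaPQ G p q = (Fintype.card V - 1) * p +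
      (q - p) * sInf {c | ∃ L : List V, L.Nodup ∧ (∀ v : V, v ∈ L) ∧
        nonAdjCount G L = c} := by
  classical
  set C : Set ℕ := {c | ∃ L : List V, L.Nodup ∧ (∀ v : V, v ∈ L) ∧ nonAdjCount G L = c}
    with hC
  have hdist2 : ∀ u v : V, u ≠ v → ¬ G.Adj u v → G.dist u v = 2 := by
    intro u v hne hna
    have h0 : G.dist u v ≠ 0 := fun h0 => hne (hconn.dist_eq_zero_iff.mp h0)
    have h1 : G.dist u v ≠ 1 := fun h1 => hna (SimpleGraph.dist_eq_one_iff_adj.mp h1)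
    have := hdiam u v
    omega
  have hadj_dist : ∀ u v : V, G.Adj u v → G.dist u v ≠ 2 := by
    intro u v hadj h2
    rw [SimpleGraph.dist_eq_one_iff_adj.mpr hadj] at h2
    omega
  have hCne : C.Nonempty := by
    refine ⟨nonAdjCount G Finset.univ.toList, Finset.univ.toList, Finset.nodup_toList _,
      fun v => ?_, rfl⟩
    simp [Finset.mem_toList]
  obtain ⟨L, hnd, hmem, hcnt⟩ : sInf C ∈ C := Nat.sInf_mem hCne
  have hlenL : L.length = Fintype.card V := by
    have hf : L.toFinset = Finset.univ := by ext x; simp [hmem]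
    rw [← List.toFinset_card_of_nodup hnd, hf, Finset.card_univ]
  -- the canonical labeling along L
  set l₀ : V → ℕ := LpqAux.lbl G p q L with hl₀
  have hlab : IsLpqLabeling G p q l₀ := by
    intro u v huv
    have hsep := LpqAux.lbl_sep G p q hpq hq L hnd u v (hmem u) (hmem v) huv
    exact ⟨fun _ => hsep.1, fun hd => hsep.2 (fun hadj => hadj_dist u v hadj hd)⟩
  have hspan : span l₀ ≤ (Fintype.card V - 1) * p + (q - p) * sInf C := by
    refine Finset.sup_le fun v _ => ?_
    have := LpqAux.lbl_le G p q hpq L v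
    rwa [hlenL, hcnt] at this
  have hub : lambdaPQ G p q ≤ (Fintype.card V - 1) * p + (q - p) * sInf C :=
    le_trans (Nat.sInf_le ⟨l₀, hlab, rfl⟩) hspan
  refine le_antisymm hub ?_
  refine le_csInf ⟨span l₀, l₀, hlab, rfl⟩ ?_
  rintro s ⟨m, hm, rfl⟩
  -- m is injective
  have hinj : Function.Injective m := by
    intro u v h
    by_contra hne
    obtain ⟨h1, h2⟩ := hm u v hne
    by_cases ha : G.Adj u v
    · have := h1 ha
      rw [h, sub_self, abs_zero] at this
      omega
    · have := h2 (hdist2 u v hne ha)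
      rw [h, sub_self, abs_zero] at this
      omega
  -- sort vertices by their labels
  let r : V → V → Prop := fun a b => m a ≤ m b
  haveI : IsTrans V r := ⟨fun _ _ _ => Nat.le_trans⟩
  haveI : IsAntisymm V r := ⟨fun a b h1 h2 => hinj (Nat.le_antisymm h1 h2)⟩
  haveI : IsTotal V r := ⟨fun a b => Nat.le_total _ _⟩
  haveI : DecidableRel r := fun a b => Nat.decLe _ _
  set L' : List V := Finset.univ.sort r with hL'
  have hsorted : L'.Pairwise r := Finset.pairwise_sort _ r
  have hnd' : L'.Nodup := Finset.sort_nodup _ r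
  have hmem' : ∀ v : V, v ∈ L' := fun v => (Finset.mem_sort r).mpr (Finset.mem_univ v)
  have hlen' : L'.length = Fintype.card V := by
    rw [hL', Finset.length_sort, Finset.card_univ]
  have hpw : L'.Pairwise (fun a b => r a b ∧ a ≠ b) := hsorted.and hnd'
  have hchain : L'.Chain' (fun a b => m a + (if G.Adj a b then p else q) ≤ m b) := by
    refine hpw.isChain.imp ?_
    rintro a b ⟨hle, hne⟩
    have habs : |(m a : ℤ) - m b| = (m b : ℤ) - m a := by
      rw [abs_sub_comm, abs_of_nonneg]
      omega
    by_cases hadj : G.Adj a b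
    · have := (hm a b hne).1 hadj
      rw [habs] at this
      simp only [hadj, if_true]
      omega
    · have := (hm a b hne).2 (hdist2 a b hne hadj)
      rw [habs] at this
      simp only [hadj, if_false]
      omega
  haveI : Nonempty V := hconn.nonempty
  have hLne : L' ≠ [] := by
    have : 0 < L'.length := by rw [hlen']; exact Fintype.card_pos
    exact List.ne_nil_of_length_pos this
  have hlb := LpqAux.chain_lb G p q hpq m L' hchain hLne
  have hgl : m (L'.getLast hLne) ≤ span m := Finset.le_sup (Finset.mem_univ _)
  have hsinf : sInf C ≤ nonAdjCount G L' := Nat.sInf_le ⟨L', hnd', hmem', rfl⟩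
  calc (Fintype.card V - 1) * p + (q - p) * sInf C
      ≤ (L'.length - 1) * p + (q - p) * nonAdjCount G L' := by
        rw [hlen']
        exact Nat.add_le_add_left (Nat.mul_le_mul_left _ hsinf) _
    _ ≤ m (L'.head hLne) + (L'.length - 1) * p + (q - p) * nonAdjCount G L' := by
        omega
    _ ≤ m (L'.getLast hLne) := hlb
    _ ≤ span m := hgl
end

section
/- Let G be a graph of diameter at most k, p = (p_1,…,p_k) with p_max ≤ 2·p_min, and H the complete weighted graph with w(u,v) = p_{dist_G(u,v)}. Then for any ordering v_1,…,v_n of V(G) there exists an L(p)-labeling of G with span Σ_{t=1}^{n−1} w(v_t, v_{t+1}); namely l(v_i) = Σ_{t=1}^{i−1} w(v_t, v_{t+1}) is a valid L(p)-labeling. -/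
/-- Let `G` have diameter at most `k` and `p` be positive on `[1, k]` with
`p_max ≤ 2 p_min`. Then for any ordering `σ = (v_1, …, v_n)` of the vertices, the
map `l(v_i) = Σ_{t=1}^{i−1} w(v_t, v_{t+1})` (with `w(u,v) = p (dist u v)`) is a
valid `L(p)`-labeling of `G`, whose span is the total weight
`Σ_{t=1}^{n−1} w(v_t, v_{t+1})` of the ordering. -/
theorem prefix_sum_labeling {V : Type*} [Fintype V] (G : SimpleGraph V)
    (p : ℕ → ℕ) (k : ℕ)
    (hconn : G.Connected) (hdiam : ∀ u v : V, G.dist u v ≤ k)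
    (hpos : ∀ d ∈ Finset.Icc 1 k, 0 < p d)
    (hratio : ∀ d ∈ Finset.Icc 1 k, ∀ d' ∈ Finset.Icc 1 k, p d ≤ 2 * p d')
    (σ : Fin (Fintype.card V) ≃ V) :
    IsLpLabeling G p (fun x => prefW G p σ (σ.symm x).val) ∧
      span (fun x => prefW G p σ (σ.symm x).val) =
        prefW G p σ (Fintype.card V - 1) := by
  classical
  set f : ℕ → ℕ := fun t =>
    if h : t + 1 < Fintype.card V then
      p (G.dist (σ ⟨t, by omega⟩) (σ ⟨t + 1, h⟩)) else 0 with hf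
  have hpref : ∀ i, prefW G p σ i = ∑ t ∈ Finset.range i, f t := fun i => rfl
  have hmono : ∀ {i j : ℕ}, i ≤ j → prefW G p σ i ≤ prefW G p σ j := by
    intro i j h
    rw [hpref, hpref]
    exact Finset.sum_le_sum_of_subset (Finset.range_subset_range.2 h)
  have hdmem : ∀ a b : V, a ≠ b → G.dist a b ∈ Finset.Icc 1 k := by
    intro a b hab
    exact Finset.mem_Icc.2 ⟨hconn.pos_dist_of_ne hab, hdiam a b⟩
  have hkey : ∀ i j : Fin (Fintype.card V), i.val < j.val →
      p (G.dist (σ i) (σ j)) ≤ ∑ t ∈ Finset.Ico i.val j.val, f t := by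
    intro i j hij
    have hjn : j.val < Fintype.card V := j.isLt
    rcases eq_or_lt_of_le (Nat.succ_le_of_lt hij) with h1 | h2
    · rw [show Finset.Ico i.val j.val = {i.val} by rw [← h1]; simp,
        Finset.sum_singleton]
      have h' : i.val + 1 < Fintype.card V := by omega
      rw [hf]
      simp only [h', dif_pos]
      have e1 : (⟨i.val, by omega⟩ : Fin (Fintype.card V)) = i := rfl
      have e2 : (⟨i.val + 1, h'⟩ : Fin (Fintype.card V)) = j := Fin.ext h1
      rw [e1, e2]
    · have hsub : f i.val + f (i.val + 1) ≤ ∑ t ∈ Finset.Ico i.val j.val, f t := by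
        have heq : ∑ t ∈ Finset.Ico i.val (i.val + 2), f t = f i.val + f (i.val + 1) := by
          rw [show i.val + 2 = (i.val + 1) + 1 from rfl,
            Finset.sum_Ico_succ_top (by omega), Finset.sum_Ico_succ_top (by omega)]
          simp
        rw [← heq]
        exact Finset.sum_le_sum_of_subset (Finset.Ico_subset_Ico le_rfl (by omega))
      have h1n : i.val + 1 < Fintype.card V := by omega
      have h2n : i.val + 1 + 1 < Fintype.card V := by omega
      have hv1 : f i.val = p (G.dist (σ ⟨i.val, by omega⟩) (σ ⟨i.val + 1, h1n⟩)) := by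
        rw [hf]; simp [h1n]
      have hv2 : f (i.val + 1) =
          p (G.dist (σ ⟨i.val + 1, h1n⟩) (σ ⟨i.val + 1 + 1, h2n⟩)) := by
        rw [hf]; simp [h2n]
      have hd1 : G.dist (σ ⟨i.val, by omega⟩) (σ ⟨i.val + 1, h1n⟩) ∈ Finset.Icc 1 k := by
        apply hdmem
        intro h
        have := σ.injective h
        simp only [Fin.mk.injEq] at this
        omega
      have hd2 : G.dist (σ ⟨i.val + 1, h1n⟩) (σ ⟨i.val + 1 + 1, h2n⟩) ∈ Finset.Icc 1 k := by
        apply hdmem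
        intro h
        have := σ.injective h
        simp only [Fin.mk.injEq] at this
        omega
      have hD : G.dist (σ i) (σ j) ∈ Finset.Icc 1 k := by
        apply hdmem
        intro h
        have := σ.injective h
        exact absurd (congrArg Fin.val this) (by omega)
      have r1 := hratio _ hD _ hd1
      have r2 := hratio _ hD _ hd2
      rw [hv1, hv2] at hsub
      omega
  have hdiffI : ∀ i j : Fin (Fintype.card V), i.val < j.val →
      (p (G.dist (σ i) (σ j)) : ℤ) ≤ (prefW G p σ j.val : ℤ) - prefW G p σ i.val := by
    intro i j hij
    have hsplit : prefW G p σ j.val =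
        prefW G p σ i.val + ∑ t ∈ Finset.Ico i.val j.val, f t := by
      rw [hpref, hpref, Finset.range_eq_Ico,
        ← Finset.sum_Ico_consecutive _ (Nat.zero_le i.val) (le_of_lt hij), Finset.range_eq_Ico]
    have h1 := hkey i j hij
    omega
  constructor
  · intro u v huv
    simp only
    have hu : σ (σ.symm u) = u := σ.apply_symm_apply u
    have hv : σ (σ.symm v) = v := σ.apply_symm_apply v
    rcases lt_trichotomy (σ.symm u).val (σ.symm v).val with h | h | h
    · have h' := hdiffI _ _ h
      rw [hu, hv] at h'
      calc (p (G.dist u v) : ℤ) ≤ _ := h'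
        _ ≤ |(prefW G p σ (σ.symm u).val : ℤ) - prefW G p σ (σ.symm v).val| := by
            rw [abs_sub_comm]; exact le_abs_self _
    · exact absurd (hu ▸ hv ▸ congrArg σ (Fin.ext h)) huv
    · have h' := hdiffI _ _ h
      rw [hu, hv, G.dist_comm] at h'
      calc (p (G.dist u v) : ℤ) ≤ _ := h'
        _ ≤ |(prefW G p σ (σ.symm u).val : ℤ) - prefW G p σ (σ.symm v).val| :=
            le_abs_self _
  · rw [span]
    apply le_antisymm
    · apply Finset.sup_le
      intro x _
      exact hmono (by have := (σ.symm x).isLt; omega)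
    · rcases Nat.eq_zero_or_pos (Fintype.card V) with h0 | h0
      · have e : Fintype.card V - 1 = 0 := by omega
        rw [e, hpref]
        simp
      · have hle := Finset.le_sup (f := fun x => prefW G p σ (σ.symm x).val)
          (Finset.mem_univ (σ ⟨Fintype.card V - 1, by omega⟩))
        simpa using hle
end
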